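/- Let x₀, y₀ ∈ ℝ and T > 0, c₀ > 0 satisfy |x₀| + |x₀ − y₀²| T ≤ c₀, |y₀| + |y₀ − x₀²| T ≤ c₀, |x₀| + c₀ T + c₀² T ≤ c₀, and |y₀| + c₀ T + c₀² T ≤ c₀. Define sequences of continuous functions on [0,T] by x⁰(t) = x₀, y⁰(t) = y₀, and x^{n+1}(t) = x₀ + ∫₀ᵗ xⁿ(s) ds − ∫₀ᵗ max_{τ∈[0,s]} (yⁿ(τ))² ds, y^{n+1}(t) = y₀ + ∫₀ᵗ yⁿ(s) ds − ∫₀ᵗ max_{τ∈[0,s]} (xⁿ(τ))² ds. Then for every n ∈ ℕ and every t ∈ [0,T]: |x^{n+1}(t) − xⁿ(t)| ≤ (c₀/T)(1 + 2c₀)ⁿ t^{n+1}/(n+1)! and |y^{n+1}(t) − yⁿ(t)| ≤ (c₀/T)(1 + 2c₀)ⁿ t^{n+1}/(n+1)!. -/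

import Mathlib

open Set intervalIntegral MeasureTheory

private lemma img_ne (g : ℝ → ℝ) {s : ℝ} (hs : 0 ≤ s) :
    ((fun τ => g τ ^ 2) '' Icc 0 s).Nonempty :=
  ⟨g 0 ^ 2, ⟨0, ⟨le_refl 0, hs⟩, rfl⟩⟩

private lemma img_bdd {g : ℝ → ℝ} {T s : ℝ} (hg : ContinuousOn g (Icc 0 T))
    (hs : s ∈ Icc 0 T) : BddAbove ((fun τ => g τ ^ 2) '' Icc 0 s) := by
  have hsub : Icc (0:ℝ) s ⊆ Icc 0 T := Icc_subset_Icc le_rfl hs.2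
  exact (isCompact_Icc.image_of_continuousOn ((hg.mono hsub).pow 2)).bddAbove

private lemma runMax_mono {g : ℝ → ℝ} {T : ℝ} (hg : ContinuousOn g (Icc 0 T)) :
    MonotoneOn (fun s => sSup ((fun τ => g τ ^ 2) '' Icc 0 s)) (Icc 0 T) := by
  intro s₁ h₁ s₂ h₂ h12
  exact csSup_le_csSup (img_bdd hg h₂) (img_ne g h₁.1)
    (Set.image_mono (Icc_subset_Icc le_rfl h12))

private lemma runMax_le {g : ℝ → ℝ} {T s c : ℝ} (hs : s ∈ Icc 0 T)
    (hb : ∀ τ ∈ Icc 0 T, |g τ| ≤ c) :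
    sSup ((fun τ => g τ ^ 2) '' Icc 0 s) ≤ c ^ 2 := by
  apply csSup_le (img_ne g hs.1)
  rintro _ ⟨τ, hτ, rfl⟩
  have h := hb τ (Icc_subset_Icc le_rfl hs.2 hτ)
  calc g τ ^ 2 = |g τ| ^ 2 := (sq_abs _).symm
    _ ≤ c ^ 2 := pow_le_pow_left₀ (abs_nonneg _) h 2

private lemma runMax_nonneg {g : ℝ → ℝ} {T s : ℝ} (hg : ContinuousOn g (Icc 0 T))
    (hs : s ∈ Icc 0 T) : 0 ≤ sSup ((fun τ => g τ ^ 2) '' Icc 0 s) :=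
  le_trans (sq_nonneg (g 0)) (le_csSup (img_bdd hg hs) ⟨0, ⟨le_rfl, hs.1⟩, rfl⟩)

private lemma runMax_sub_le_aux {p q : ℝ → ℝ} {T s C : ℝ} (hp : ContinuousOn p (Icc 0 T))
    (hs : s ∈ Icc 0 T)
    (h : ∀ τ ∈ Icc 0 s, q τ ^ 2 - p τ ^ 2 ≤ C) :
    sSup ((fun τ => q τ ^ 2) '' Icc 0 s) - sSup ((fun τ => p τ ^ 2) '' Icc 0 s) ≤ C := by
  rw [sub_le_iff_le_add]
  apply csSup_le (img_ne q hs.1)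
  rintro _ ⟨τ, hτ, rfl⟩
  have h1 : p τ ^ 2 ≤ sSup ((fun τ => p τ ^ 2) '' Icc 0 s) :=
    le_csSup (img_bdd hp hs) ⟨τ, hτ, rfl⟩
  have h2 := h τ hτ
  dsimp only
  linarith

private lemma runMax_sub_le {p q : ℝ → ℝ} {T s C : ℝ} (hp : ContinuousOn p (Icc 0 T))
    (hq : ContinuousOn q (Icc 0 T)) (hs : s ∈ Icc 0 T)
    (h : ∀ τ ∈ Icc 0 s, |q τ ^ 2 - p τ ^ 2| ≤ C) :
    |sSup ((fun τ => q τ ^ 2) '' Icc 0 s) - sSup ((fun τ => p τ ^ 2) '' Icc 0 s)| ≤ C := by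
  rw [abs_le]
  constructor
  · have := runMax_sub_le_aux hq hs (fun τ hτ => by
      have := abs_le.1 (h τ hτ); linarith [this.1])
    linarith
  · exact runMax_sub_le_aux hp hs (fun τ hτ => (abs_le.1 (h τ hτ)).2)

private lemma runMax_integrable {g : ℝ → ℝ} {T t : ℝ} (hg : ContinuousOn g (Icc 0 T))
    (ht : t ∈ Icc 0 T) :
    IntervalIntegrable (fun s => sSup ((fun τ => g τ ^ 2) '' Icc 0 s)) volume 0 t := by
  apply MonotoneOn.intervalIntegrable
  have : uIcc (0:ℝ) t = Icc 0 t := uIcc_of_le ht.1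
  rw [this]
  exact (runMax_mono hg).mono (Icc_subset_Icc le_rfl ht.2)

set_option maxHeartbeats 1000000 in
private lemma step_est {T c₀ : ℝ} (hT : 0 < T) (hc₀ : 0 < c₀) (n : ℕ)
    (a a' p q D : ℝ → ℝ)
    (ha : ContinuousOn a (Icc 0 T)) (ha' : ContinuousOn a' (Icc 0 T))
    (hp : ContinuousOn p (Icc 0 T)) (hq : ContinuousOn q (Icc 0 T))
    (hpb : ∀ t ∈ Icc 0 T, |p t| ≤ c₀) (hqb : ∀ t ∈ Icc 0 T, |q t| ≤ c₀)
    (hD : ∀ t ∈ Icc 0 T, D t =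
      ((∫ s in (0:ℝ)..t, a' s) - ∫ s in (0:ℝ)..t, a s)
      - ((∫ s in (0:ℝ)..t, sSup ((fun τ => q τ ^ 2) '' Icc 0 s))
        - ∫ s in (0:ℝ)..t, sSup ((fun τ => p τ ^ 2) '' Icc 0 s)))
    (hIHa : ∀ t ∈ Icc 0 T,
      |a' t - a t| ≤ c₀ / T * (1 + 2*c₀)^n * t^(n+1) / (Nat.factorial (n+1)))
    (hIHp : ∀ t ∈ Icc 0 T,
      |q t - p t| ≤ c₀ / T * (1 + 2*c₀)^n * t^(n+1) / (Nat.factorial (n+1))) :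
    ∀ t ∈ Icc 0 T,
      |D t| ≤ c₀ / T * (1 + 2*c₀)^(n+1) * t^(n+2) / (Nat.factorial (n+2)) := by
  intro t ht
  obtain ⟨K, hK⟩ : ∃ K : ℝ, K = c₀ / T * (1 + 2*c₀)^n / (Nat.factorial (n+1)) := ⟨_, rfl⟩
  have hfac : (0:ℝ) < (Nat.factorial (n+1) : ℝ) := by positivity
  have hK0 : 0 ≤ K := by rw [hK]; positivity
  have hKeq : ∀ s : ℝ, c₀ / T * (1 + 2*c₀)^n * s^(n+1) / (Nat.factorial (n+1))
      = K * s^(n+1) := fun s => by rw [hK]; ring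
  have huIcc : uIcc (0:ℝ) t = Icc 0 t := uIcc_of_le ht.1
  have huIoc : uIoc (0:ℝ) t = Ioc 0 t := uIoc_of_le ht.1
  have hsubT : Icc (0:ℝ) t ⊆ Icc 0 T := Icc_subset_Icc le_rfl ht.2
  have hia : IntervalIntegrable a volume 0 t :=
    (by rw [huIcc]; exact ha.mono hsubT : ContinuousOn a (uIcc 0 t)).intervalIntegrable
  have hia' : IntervalIntegrable a' volume 0 t :=
    (by rw [huIcc]; exact ha'.mono hsubT : ContinuousOn a' (uIcc 0 t)).intervalIntegrable
  have hiq := runMax_integrable hq ht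
  have hip := runMax_integrable hp ht
  have key : D t = ∫ s in (0:ℝ)..t, ((a' s - a s)
      - (sSup ((fun τ => q τ ^ 2) '' Icc 0 s) - sSup ((fun τ => p τ ^ 2) '' Icc 0 s))) := by
    rw [hD t ht, ← intervalIntegral.integral_sub hia' hia,
      ← intervalIntegral.integral_sub hiq hip,
      ← intervalIntegral.integral_sub (hia'.sub hia) (hiq.sub hip)]
  have hb : ∀ s ∈ uIoc (0:ℝ) t, ‖(a' s - a s)
      - (sSup ((fun τ => q τ ^ 2) '' Icc 0 s) - sSup ((fun τ => p τ ^ 2) '' Icc 0 s))‖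
      ≤ (1 + 2*c₀) * (K * s^(n+1)) := by
    intro s hs
    rw [huIoc] at hs
    have hsT : s ∈ Icc 0 T := ⟨hs.1.le, hs.2.trans ht.2⟩
    have h1 : |a' s - a s| ≤ K * s^(n+1) := by
      have := hIHa s hsT; rwa [hKeq] at this
    have h2 : |sSup ((fun τ => q τ ^ 2) '' Icc 0 s)
        - sSup ((fun τ => p τ ^ 2) '' Icc 0 s)| ≤ 2 * c₀ * (K * s^(n+1)) := by
      apply runMax_sub_le hp hq hsT
      intro τ hτ
      have hτT : τ ∈ Icc 0 T := ⟨hτ.1, hτ.2.trans hsT.2⟩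
      have hqp : |q τ - p τ| ≤ K * τ^(n+1) := by
        have := hIHp τ hτT; rwa [hKeq] at this
      have hsum : |q τ + p τ| ≤ 2 * c₀ := by
        have := hpb τ hτT; have := hqb τ hτT
        have := abs_add_le (q τ) (p τ); linarith
      have heq : q τ ^ 2 - p τ ^ 2 = (q τ - p τ) * (q τ + p τ) := by ring
      rw [heq, abs_mul]
      have hpow : τ^(n+1) ≤ s^(n+1) := pow_le_pow_left₀ hτ.1 hτ.2 (n+1)
      have hKτ : K * τ^(n+1) ≤ K * s^(n+1) := by
        apply mul_le_mul_of_nonneg_left hpow hK0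
      calc |q τ - p τ| * |q τ + p τ| ≤ (K * s^(n+1)) * (2*c₀) := by
            apply mul_le_mul (hqp.trans hKτ) hsum (abs_nonneg _)
            exact mul_nonneg hK0 (pow_nonneg hs.1.le _)
        _ = 2 * c₀ * (K * s^(n+1)) := by ring
    rw [Real.norm_eq_abs]
    calc |(a' s - a s) - (sSup ((fun τ => q τ ^ 2) '' Icc 0 s)
          - sSup ((fun τ => p τ ^ 2) '' Icc 0 s))|
        ≤ |a' s - a s| + |sSup ((fun τ => q τ ^ 2) '' Icc 0 s)
          - sSup ((fun τ => p τ ^ 2) '' Icc 0 s)| := abs_sub _ _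
      _ ≤ K * s^(n+1) + 2 * c₀ * (K * s^(n+1)) := add_le_add h1 h2
      _ = (1 + 2*c₀) * (K * s^(n+1)) := by ring
  have hgi : IntervalIntegrable (fun s => (1 + 2*c₀) * (K * s^(n+1))) volume 0 t := by
    apply Continuous.intervalIntegrable; continuity
  have hnorm : |D t| ≤ |∫ s in (0:ℝ)..t, (1 + 2*c₀) * (K * s^(n+1))| := by
    rw [key, ← Real.norm_eq_abs]
    exact intervalIntegral.norm_integral_le_abs_of_norm_le
      (ae_restrict_of_forall_mem measurableSet_uIoc hb) hgi
  have hval : (∫ s in (0:ℝ)..t, (1 + 2*c₀) * (K * s^(n+1)))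
      = c₀ / T * (1 + 2*c₀)^(n+1) * t^(n+2) / (Nat.factorial (n+2)) := by
    rw [intervalIntegral.integral_const_mul, intervalIntegral.integral_const_mul,
      integral_pow]
    have h1 : (0:ℝ) ^ (n+1+1) = 0 := zero_pow (by omega)
    rw [h1, hK, Nat.factorial_succ (n+1)]
    have h2 : (0:ℝ) < ((n:ℝ)+1+1) := by positivity
    push_cast
    field_simp
    ring
  have hVnn : 0 ≤ c₀ / T * (1 + 2*c₀)^(n+1) * t^(n+2) / (Nat.factorial (n+2)) :=
    div_nonneg (mul_nonneg (mul_nonneg (div_nonneg hc₀.le hT.le)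
      (pow_nonneg (by linarith) _)) (pow_nonneg ht.1 _)) (Nat.cast_nonneg _)
  rwa [hval, abs_of_nonneg hVnn] at hnorm

private lemma bound_step {T c₀ u₀ : ℝ} (hT : 0 < T) (hc₀ : 0 < c₀)
    (h3 : |u₀| + c₀ * T + c₀ ^ 2 * T ≤ c₀)
    (f g F : ℝ → ℝ) (hg : ContinuousOn g (Icc 0 T))
    (hfb : ∀ t ∈ Icc 0 T, |f t| ≤ c₀) (hgb : ∀ t ∈ Icc 0 T, |g t| ≤ c₀)
    (hF : ∀ t ∈ Icc 0 T, F t = u₀ + (∫ s in (0:ℝ)..t, f s)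
        - ∫ s in (0:ℝ)..t, sSup ((fun τ => g τ ^ 2) '' Icc 0 s)) :
    ∀ t ∈ Icc 0 T, |F t| ≤ c₀ := by
  intro t ht
  rw [hF t ht]
  have huIoc : uIoc (0:ℝ) t = Ioc 0 t := uIoc_of_le ht.1
  have hmem : ∀ s ∈ uIoc (0:ℝ) t, s ∈ Icc 0 T := by
    intro s hs; rw [huIoc] at hs; exact ⟨hs.1.le, hs.2.trans ht.2⟩
  have h1 : |∫ s in (0:ℝ)..t, f s| ≤ c₀ * t := by
    have := intervalIntegral.norm_integral_le_of_norm_le_const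
      (C := c₀) (f := f) (a := (0:ℝ)) (b := t)
      (fun s hs => by rw [Real.norm_eq_abs]; exact hfb s (hmem s hs))
    rwa [Real.norm_eq_abs, sub_zero, abs_of_nonneg ht.1] at this
  have h2 : |∫ s in (0:ℝ)..t, sSup ((fun τ => g τ ^ 2) '' Icc 0 s)| ≤ c₀ ^ 2 * t := by
    have := intervalIntegral.norm_integral_le_of_norm_le_const
      (C := c₀ ^ 2) (f := fun s => sSup ((fun τ => g τ ^ 2) '' Icc 0 s)) (a := (0:ℝ)) (b := t)
      (fun s hs => by
        rw [Real.norm_eq_abs, abs_of_nonneg (runMax_nonneg hg (hmem s hs))]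
        exact runMax_le (hmem s hs) hgb)
    rwa [Real.norm_eq_abs, sub_zero, abs_of_nonneg ht.1] at this
  have habs : |u₀ + (∫ s in (0:ℝ)..t, f s)
      - ∫ s in (0:ℝ)..t, sSup ((fun τ => g τ ^ 2) '' Icc 0 s)|
      ≤ |u₀| + |∫ s in (0:ℝ)..t, f s|
        + |∫ s in (0:ℝ)..t, sSup ((fun τ => g τ ^ 2) '' Icc 0 s)| := by
    calc |u₀ + (∫ s in (0:ℝ)..t, f s)
        - ∫ s in (0:ℝ)..t, sSup ((fun τ => g τ ^ 2) '' Icc 0 s)|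
        ≤ |u₀ + ∫ s in (0:ℝ)..t, f s|
          + |∫ s in (0:ℝ)..t, sSup ((fun τ => g τ ^ 2) '' Icc 0 s)| := abs_sub _ _
      _ ≤ _ := by have := abs_add_le u₀ (∫ s in (0:ℝ)..t, f s); linarith
  have hct : c₀ * t ≤ c₀ * T := mul_le_mul_of_nonneg_left ht.2 hc₀.le
  have hct2 : c₀ ^ 2 * t ≤ c₀ ^ 2 * T := mul_le_mul_of_nonneg_left ht.2 (by positivity)
  linarith


/-- Estimates on successive differences of the Picard iterates of the system with maxima
`ẋ = x − max_{[0,t]} y²`, `ẏ = y − max_{[0,t]} x²`: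
`|x^{n+1}(t) − xⁿ(t)| ≤ (c₀/T)(1+2c₀)ⁿ t^{n+1}/(n+1)!` and similarly for `y`. -/
theorem picard_iterates_square_system_estimate (x₀ y₀ T c₀ : ℝ)
    (hT : 0 < T) (hc₀ : 0 < c₀)
    (h1 : |x₀| + |x₀ - y₀ ^ 2| * T ≤ c₀) (h2 : |y₀| + |y₀ - x₀ ^ 2| * T ≤ c₀)
    (h3 : |x₀| + c₀ * T + c₀ ^ 2 * T ≤ c₀) (h4 : |y₀| + c₀ * T + c₀ ^ 2 * T ≤ c₀)
    (x y : ℕ → ℝ → ℝ)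
    (hxc : ∀ n, ContinuousOn (x n) (Set.Icc 0 T)) (hyc : ∀ n, ContinuousOn (y n) (Set.Icc 0 T))
    (hx0 : ∀ t ∈ Set.Icc (0:ℝ) T, x 0 t = x₀) (hy0 : ∀ t ∈ Set.Icc (0:ℝ) T, y 0 t = y₀)
    (hxrec : ∀ n, ∀ t ∈ Set.Icc (0:ℝ) T, x (n + 1) t =
      x₀ + (∫ s in (0:ℝ)..t, x n s)
        - ∫ s in (0:ℝ)..t, sSup ((fun τ => (y n τ) ^ 2) '' Set.Icc 0 s))
    (hyrec : ∀ n, ∀ t ∈ Set.Icc (0:ℝ) T, y (n + 1) t =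
      y₀ + (∫ s in (0:ℝ)..t, y n s)
        - ∫ s in (0:ℝ)..t, sSup ((fun τ => (x n τ) ^ 2) '' Set.Icc 0 s)) :
    ∀ n, ∀ t ∈ Set.Icc (0:ℝ) T,
      |x (n + 1) t - x n t| ≤ (c₀ / T) * (1 + 2 * c₀) ^ n * t ^ (n + 1) / (Nat.factorial (n + 1)) ∧
      |y (n + 1) t - y n t| ≤ (c₀ / T) * (1 + 2 * c₀) ^ n * t ^ (n + 1) / (Nat.factorial (n + 1)) := by
  -- uniform bounds
  have hbound : ∀ n, (∀ t ∈ Icc (0:ℝ) T, |x n t| ≤ c₀) ∧ (∀ t ∈ Icc (0:ℝ) T, |y n t| ≤ c₀) := by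
    intro n
    induction n with
    | zero =>
      have hcT : 0 < c₀ * T := mul_pos hc₀ hT
      have hcT2 : 0 < c₀ ^ 2 * T := mul_pos (by positivity) hT
      exact ⟨fun t ht => by rw [hx0 t ht]; linarith,
        fun t ht => by rw [hy0 t ht]; linarith⟩
    | succ n ih =>
      exact ⟨bound_step hT hc₀ h3 (x n) (y n) (x (n+1)) (hyc n) ih.1 ih.2 (hxrec n),
        bound_step hT hc₀ h4 (y n) (x n) (y (n+1)) (hxc n) ih.2 ih.1 (hyrec n)⟩
  intro n
  induction n with
  | zero =>
    intro t ht
    -- integrals of constants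
    have huIcc : uIcc (0:ℝ) t = Icc 0 t := uIcc_of_le ht.1
    have hsubT : Icc (0:ℝ) t ⊆ Icc 0 T := Icc_subset_Icc le_rfl ht.2
    have hix : (∫ s in (0:ℝ)..t, x 0 s) = x₀ * t := by
      rw [intervalIntegral.integral_congr (g := fun _ => x₀)
        (fun s hs => hx0 s (hsubT (huIcc ▸ hs)))]
      simp [mul_comm]
    have hiy : (∫ s in (0:ℝ)..t, y 0 s) = y₀ * t := by
      rw [intervalIntegral.integral_congr (g := fun _ => y₀)
        (fun s hs => hy0 s (hsubT (huIcc ▸ hs)))]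
      simp [mul_comm]
    have hMy : (∫ s in (0:ℝ)..t, sSup ((fun τ => (y 0 τ) ^ 2) '' Icc 0 s)) = y₀ ^ 2 * t := by
      rw [intervalIntegral.integral_congr (g := fun _ => y₀ ^ 2) (fun s hs => by
        have hs' : s ∈ Icc 0 t := huIcc ▸ hs
        have himg : (fun τ => (y 0 τ) ^ 2) '' Icc 0 s = {y₀ ^ 2} := by
          rw [show (fun τ => (y 0 τ) ^ 2) '' Icc 0 s = (fun _ => y₀ ^ 2) '' Icc (0:ℝ) s from
            Set.image_congr (fun τ hτ => by
              rw [hy0 τ (hsubT (Icc_subset_Icc le_rfl hs'.2 hτ))])]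
          exact Set.Nonempty.image_const (nonempty_Icc.2 hs'.1) _
        simp [himg])]
      simp [mul_comm]
    have hMx : (∫ s in (0:ℝ)..t, sSup ((fun τ => (x 0 τ) ^ 2) '' Icc 0 s)) = x₀ ^ 2 * t := by
      rw [intervalIntegral.integral_congr (g := fun _ => x₀ ^ 2) (fun s hs => by
        have hs' : s ∈ Icc 0 t := huIcc ▸ hs
        have himg : (fun τ => (x 0 τ) ^ 2) '' Icc 0 s = {x₀ ^ 2} := by
          rw [show (fun τ => (x 0 τ) ^ 2) '' Icc 0 s = (fun _ => x₀ ^ 2) '' Icc (0:ℝ) s from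
            Set.image_congr (fun τ hτ => by
              rw [hx0 τ (hsubT (Icc_subset_Icc le_rfl hs'.2 hτ))])]
          exact Set.Nonempty.image_const (nonempty_Icc.2 hs'.1) _
        simp [himg])]
      simp [mul_comm]
    have hd1 : |x₀ - y₀ ^ 2| ≤ c₀ / T := by
      rw [le_div_iff₀ hT]
      have := abs_nonneg x₀; linarith
    have hd2 : |y₀ - x₀ ^ 2| ≤ c₀ / T := by
      rw [le_div_iff₀ hT]
      have := abs_nonneg y₀; linarith
    constructor
    · rw [hxrec 0 t ht, hx0 t ht, hix, hMy]
      have : x₀ + x₀ * t - y₀ ^ 2 * t - x₀ = (x₀ - y₀ ^ 2) * t := by ring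
      rw [this, abs_mul, abs_of_nonneg ht.1]
      calc |x₀ - y₀ ^ 2| * t ≤ (c₀ / T) * t := mul_le_mul_of_nonneg_right hd1 ht.1
        _ = c₀ / T * (1 + 2 * c₀) ^ 0 * t ^ (0 + 1) / (Nat.factorial (0 + 1)) := by
          simp
    · rw [hyrec 0 t ht, hy0 t ht, hiy, hMx]
      have : y₀ + y₀ * t - x₀ ^ 2 * t - y₀ = (y₀ - x₀ ^ 2) * t := by ring
      rw [this, abs_mul, abs_of_nonneg ht.1]
      calc |y₀ - x₀ ^ 2| * t ≤ (c₀ / T) * t := mul_le_mul_of_nonneg_right hd2 ht.1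
        _ = c₀ / T * (1 + 2 * c₀) ^ 0 * t ^ (0 + 1) / (Nat.factorial (0 + 1)) := by
          simp
  | succ n ih =>
    have hDx : ∀ t ∈ Icc (0:ℝ) T, x (n+2) t - x (n+1) t =
        ((∫ s in (0:ℝ)..t, x (n+1) s) - ∫ s in (0:ℝ)..t, x n s)
        - ((∫ s in (0:ℝ)..t, sSup ((fun τ => (y (n+1) τ) ^ 2) '' Icc 0 s))
          - ∫ s in (0:ℝ)..t, sSup ((fun τ => (y n τ) ^ 2) '' Icc 0 s)) := by
      intro t ht
      rw [hxrec (n+1) t ht, hxrec n t ht]; ring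
    have hDy : ∀ t ∈ Icc (0:ℝ) T, y (n+2) t - y (n+1) t =
        ((∫ s in (0:ℝ)..t, y (n+1) s) - ∫ s in (0:ℝ)..t, y n s)
        - ((∫ s in (0:ℝ)..t, sSup ((fun τ => (x (n+1) τ) ^ 2) '' Icc 0 s))
          - ∫ s in (0:ℝ)..t, sSup ((fun τ => (x n τ) ^ 2) '' Icc 0 s)) := by
      intro t ht
      rw [hyrec (n+1) t ht, hyrec n t ht]; ring
    intro t ht
    constructor
    · exact step_est hT hc₀ n (x n) (x (n+1)) (y n) (y (n+1))
        (fun t => x (n+2) t - x (n+1) t)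
        (hxc n) (hxc (n+1)) (hyc n) (hyc (n+1))
        (hbound n).2 (hbound (n+1)).2 hDx
        (fun t ht => (ih t ht).1) (fun t ht => (ih t ht).2) t ht
    · exact step_est hT hc₀ n (y n) (y (n+1)) (x n) (x (n+1))
        (fun t => y (n+2) t - y (n+1) t)
        (hyc n) (hyc (n+1)) (hxc n) (hxc (n+1))
        (hbound n).1 (hbound (n+1)).1 hDy
        (fun t ht => (ih t ht).2) (fun t ht => (ih t ht).1) t ht
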